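/- Let L be a complete Heyting algebra (frame), and S ⊆ L a subset closed under arbitrary infima and such that for all U ∈ S and V ∈ L, the Heyting implication V ⇨ U belongs to S. Let N = ⨅ S. If S with the induced order is a Boolean algebra, then S = {V ⇨ N : V ∈ L}. -/

import Mathlib

theorem boolean_sublocale_is_b_of_N
    (L : Type*) [Order.Frame L] (S : Set L)
    (hInf : ∀ T : Set L, T ⊆ S → sInf T ∈ S)
    (hHimp : ∀ U ∈ S, ∀ V : L, V ⇨ U ∈ S)
    (N : L) (hN : N = sInf S)
    (hBool : ∀ U ∈ S, ∃ V ∈ S, U ⊓ V = N ∧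
      sInf {W : L | W ∈ S ∧ U ≤ W ∧ V ≤ W} = sInf (∅ : Set L)) :
    S = {W : L | ∃ V : L, W = V ⇨ N} := by
  have hNS : N ∈ S := hN ▸ hInf S le_rfl
  ext U
  constructor
  · intro hU
    obtain ⟨V, hV, hmeet, hjoin⟩ := hBool U hU
    refine ⟨V, le_antisymm (le_himp_iff.2 hmeet.le) ?_⟩
    have hW : (V ⇨ N) ⇨ U ∈ {W : L | W ∈ S ∧ U ≤ W ∧ V ≤ W} := by
      refine ⟨hHimp U hU _, le_himp_iff.2 inf_le_left, le_himp_iff.2 ?_⟩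
      calc V ⊓ (V ⇨ N) ≤ N := inf_himp_le
        _ ≤ U := hN ▸ sInf_le hU
    have htop : (⊤ : L) ≤ (V ⇨ N) ⇨ U := by
      rw [sInf_empty] at hjoin
      exact hjoin ▸ sInf_le hW
    exact le_himp_iff.1 htop |>.trans_eq' (top_inf_eq _)
  · rintro ⟨V, rfl⟩
    exact hHimp N hNS V
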